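/- Let A = diag(−λ_1 D + Q, ..., −λ_N D + Q) be a block-diagonal matrix in ℝ^{mN×mN} and let B̃ = col(B·𝓑_1, ..., B·𝓑_N) where B = e_1 ∈ ℝ^m and 𝓑_n ∈ ℝ^{1×N} are row vectors stacked into the N×N matrix 𝓑 = col(𝓑_1,...,𝓑_N). Assume: (i) the subdiagonal entries of Q are nonzero and Q has zero entries below the first subdiagonal; (ii) the λ_n are pairwise distinct; (iii) 𝓑 is nonsingular. Then the pair (A, B̃) is stabilizable; in particular, rank[A − μ I_{mN}, B̃] = mN for every complex μ with nonnegative real part. -/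

import Mathlib

open Matrix

/-- Hautus stabilizability test for the modal system
`(A, B̃)` with block-diagonal `A = diag(−λ_n D + Q)` and `B̃` built from
`B = e₁` and a nonsingular matrix `𝓑`. -/
theorem stmt3 (m N : ℕ) (hm : 0 < m) (hN : 0 < N)
    (d : Fin m → ℝ) (hd : ∀ i, 0 < d i)
    (Q : Matrix (Fin m) (Fin m) ℝ)
    (hcascade : ∀ i j : Fin m, (j : ℕ) + 1 < (i : ℕ) → Q i j = 0)
    (hsub : ∀ i j : Fin m, (i : ℕ) = (j : ℕ) + 1 → Q i j ≠ 0)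
    (lam : Fin N → ℝ) (hnonneg : ∀ n, 0 ≤ lam n)
    (hdist : Function.Injective lam)
    (B : Fin m → ℝ) (hB : ∀ i : Fin m, B i = if (i : ℕ) = 0 then 1 else 0)
    (𝓑 : Matrix (Fin N) (Fin N) ℝ) (h𝓑 : IsUnit 𝓑.det)
    (A : Matrix (Fin N × Fin m) (Fin N × Fin m) ℝ)
    (hA : ∀ p q : Fin N × Fin m, A p q =
      if p.1 = q.1 then -(lam p.1) * Matrix.diagonal d p.2 q.2 + Q p.2 q.2 else 0)
    (Bt : Matrix (Fin N × Fin m) (Fin N) ℝ)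
    (hBt : ∀ (p : Fin N × Fin m) (j : Fin N), Bt p j = B p.2 * 𝓑 p.1 j) :
    ∀ μ : ℂ, 0 ≤ μ.re →
      (Matrix.fromCols (A.map (Complex.ofReal) - μ • (1 : Matrix (Fin N × Fin m) (Fin N × Fin m) ℂ))
        (Bt.map Complex.ofReal)).rank = m * N := by
  intro μ _
  classical
  set i0 : Fin m := ⟨0, hm⟩ with hi0
  set M : Matrix (Fin N × Fin m) ((Fin N × Fin m) ⊕ Fin N) ℂ :=
    Matrix.fromCols
      (A.map (Complex.ofReal) - μ • (1 : Matrix (Fin N × Fin m) (Fin N × Fin m) ℂ))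
      (Bt.map Complex.ofReal) with hM
  -- key: trivial left kernel
  have key : ∀ v : (Fin N × Fin m) → ℂ, (∀ c, ∑ p, M p c * v p = 0) → v = 0 := by
    intro v hv
    -- Step A: the first component of each block vanishes
    have hw : ∀ n : Fin N, v (n, i0) = 0 := by
      have hmap : IsUnit (𝓑.map (Complex.ofReal)).det := by
        rw [show 𝓑.map (Complex.ofReal) = Complex.ofRealHom.mapMatrix 𝓑 from rfl,
          ← RingHom.map_det]
        exact h𝓑.map Complex.ofRealHom
      have hvec : (fun n => v (n, i0)) ᵥ* (𝓑.map Complex.ofReal) = 0 := by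
        funext j
        have h := hv (Sum.inr j)
        rw [Fintype.sum_prod_type] at h
        have hinner : ∀ n : Fin N,
            (∑ i : Fin m, M (n, i) (Sum.inr j) * v (n, i))
              = v (n, i0) * ((𝓑 n j : ℝ) : ℂ) := by
          intro n
          rw [Finset.sum_eq_single i0]
          · simp [hM, hBt, hB, hi0, mul_comm]
          · intro i _ hi
            have : (i : ℕ) ≠ 0 := by
              intro h0
              exact hi (Fin.ext (by simp [h0, hi0]))
            simp [hM, hBt, hB, this]
          · simp
        simp only [hinner] at h
        simpa [Matrix.vecMul, dotProduct] using h
      have h0 := congrArg (fun w => w ᵥ* (𝓑.map Complex.ofReal)⁻¹) hvec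
      have h1 : (fun n => v (n, i0)) = 0 := by
        simpa [Matrix.vecMul_vecMul, Matrix.mul_nonsing_inv _ hmap] using h0
      intro n
      simpa using congrFun h1 n
    -- Step B: induction along the cascade
    have hz : ∀ (n : Fin N) (k : ℕ) (hk : k < m), v (n, ⟨k, hk⟩) = 0 := by
      intro n k
      induction k using Nat.strong_induction_on with
      | _ k ih =>
        intro hk
        match k, ih, hk with
        | 0, _, hk => exact hw n
        | (j+1), ih, hk =>
          have hjm : j < m := Nat.lt_of_succ_lt hk
          have h := hv (Sum.inl (n, ⟨j, hjm⟩))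
          rw [Finset.sum_eq_single ((n, ⟨j+1, hk⟩) : Fin N × Fin m)] at h
          · -- the single coefficient is Q (j+1) j ≠ 0
            have hcoef : M (n, ⟨j+1, hk⟩) (Sum.inl (n, ⟨j, hjm⟩))
                = ((Q ⟨j+1, hk⟩ ⟨j, hjm⟩ : ℝ) : ℂ) := by
              have hne : (⟨j+1, hk⟩ : Fin m) ≠ ⟨j, hjm⟩ := by
                simp [Fin.ext_iff]
              simp [hM, hA, Matrix.diagonal, hne, Matrix.one_apply, Prod.ext_iff]
            rw [hcoef] at h
            have hQ : Q ⟨j+1, hk⟩ ⟨j, hjm⟩ ≠ 0 := hsub _ _ rfl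
            have : ((Q ⟨j+1, hk⟩ ⟨j, hjm⟩ : ℝ) : ℂ) ≠ 0 := by
              exact_mod_cast hQ
            exact (mul_eq_zero.mp h).resolve_left this
          · -- all other terms vanish
            rintro ⟨n', i⟩ _ hne
            by_cases hn : n' = n
            · subst hn
              by_cases hle : (i : ℕ) < j + 1
              · have : v (n', i) = 0 := by
                  have := ih (i : ℕ) hle i.isLt
                  simpa using this
                simp [this]
              · have hgt : j + 1 < (i : ℕ) := by
                  rcases Nat.lt_or_ge (j+1) (i : ℕ) with h' | h'
                  · exact h'
                  · exfalso
                    apply hne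
                    have : (i : ℕ) = j + 1 := le_antisymm h' (Nat.le_of_not_lt hle)
                    simp [Prod.ext_iff, Fin.ext_iff, this]
                have hQ0 : Q i ⟨j, hjm⟩ = 0 := hcascade _ _ hgt
                have hdiag : Matrix.diagonal d i ⟨j, hjm⟩ = 0 := by
                  apply Matrix.diagonal_apply_ne
                  simp [Fin.ext_iff]; omega
                have hne2 : (i : Fin m) ≠ ⟨j, hjm⟩ := by
                  simp [Fin.ext_iff]; omega
                have hM0 : M (n', i) (Sum.inl (n', ⟨j, hjm⟩)) = 0 := by
                  simp [hM, hA, hQ0, hdiag, Matrix.one_apply, Prod.ext_iff, hne2]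
                simp [hM0]
            · have hM0 : M (n', i) (Sum.inl (n, ⟨j, hjm⟩)) = 0 := by
                simp [hM, hA, Matrix.one_apply, Prod.ext_iff, hn]
              simp [hM0]
          · simp
    funext p
    obtain ⟨n, i⟩ := p
    have := hz n (i : ℕ) i.isLt
    simpa using this
  -- now convert to a rank statement
  have hinj : Function.Injective (Matrix.mulVecLin Mᵀ) := by
    rw [← LinearMap.ker_eq_bot, LinearMap.ker_eq_bot']
    intro v hv
    apply key
    intro c
    have := congrFun hv c
    simpa [Matrix.mulVecLin_apply, Matrix.mulVec, Matrix.vecMul, dotProduct,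
      Matrix.transpose_apply, mul_comm] using this
  have hr : Mᵀ.rank = m * N := by
    rw [Matrix.rank, LinearMap.finrank_range_of_inj hinj,
      Module.finrank_fintype_fun_eq_card]
    simp [Nat.mul_comm]
  rw [← Matrix.rank_transpose]
  exact hr
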